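/- Let A, B, E, F be words over {+,-,*} such that A' = E' and B' = F' (equal *-deletions), and suppose the cyclic words A+B** and E-F** represent the same cycle, i.e. one of E-F** or its dual is a rotation of A+B**. Then B**A equals the dual of E**F, i.e. B**A = Ē**F̄. -/

import Mathlib

inductive Symb : Type
  | plus | minus | star
deriving DecidableEq


/-- the dual of a symbol: `+` ↦ `-`, `-` ↦ `+`, `*` ↦ `*` -/
def dualSym : Symb → Symb
  | Symb.plus => Symb.minus
  | Symb.minus => Symb.plus
  | Symb.star => Symb.star

/-- the dual (involution) of a word: reverse and dualize each symbol -/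
def dualWord (W : List Symb) : List Symb := (W.map dualSym).reverse

/-- the arc relation of the reflexive path `P(W)` on vertices `{0,…,|W|}` -/
def pathArc (W : List Symb) (i j : ℕ) : Prop :=
  i ≤ W.length ∧ j ≤ W.length ∧
    (i = j ∨ (j = i + 1 ∧ (W[i]? = some Symb.plus ∨ W[i]? = some Symb.star))
           ∨ (i = j + 1 ∧ (W[j]? = some Symb.minus ∨ W[j]? = some Symb.star)))

/-- `f` is an end-point preserving homomorphism from the path `P(V)` onto the path `P(U)` -/
def EPHom (V U : List Symb) (f : ℕ → ℕ) : Prop :=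
  f 0 = 0 ∧ f V.length = U.length ∧
  (∀ i j, pathArc V i j → pathArc U (f i) (f j)) ∧
  (∀ m, m ≤ U.length → ∃ i, i ≤ V.length ∧ f i = m)

/-- the order on words: `U ≤ V` iff there is an end-point preserving
homomorphism from `P(V)` onto `P(U)` -/
def wle (U V : List Symb) : Prop := ∃ f, EPHom V U f

/-- the star-deletion of a word -/
def starDel (W : List Symb) : List Symb := W.filter (fun s => s ≠ Symb.star)

set_option linter.unreachableTactic false
set_option linter.unusedTactic false

namespace Stmt10Aux

def valS : Symb → ℤ
  | Symb.plus => 1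
  | Symb.minus => -1
  | Symb.star => 0

def wsum (l : List Symb) : ℤ := (l.map valS).sum

@[simp] lemma valS_dualSym (s : Symb) : valS (dualSym s) = - valS s := by
  cases s <;> rfl

@[simp] lemma wsum_nil : wsum [] = 0 := rfl

@[simp] lemma wsum_cons (s : Symb) (l : List Symb) : wsum (s :: l) = valS s + wsum l := by
  simp [wsum]

@[simp] lemma wsum_append (l₁ l₂ : List Symb) : wsum (l₁ ++ l₂) = wsum l₁ + wsum l₂ := by
  simp [wsum]

@[simp] lemma wsum_dualWord (l : List Symb) : wsum (dualWord l) = - wsum l := by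
  induction l with
  | nil => rfl
  | cons s t ih => simp [dualWord, wsum] at ih ⊢; omega

@[simp] lemma starDel_nil : starDel [] = [] := rfl

@[simp] lemma starDel_cons_star (l : List Symb) : starDel (Symb.star :: l) = starDel l := by
  simp [starDel]

@[simp] lemma starDel_cons_plus (l : List Symb) :
    starDel (Symb.plus :: l) = Symb.plus :: starDel l := by simp [starDel]

@[simp] lemma starDel_cons_minus (l : List Symb) :
    starDel (Symb.minus :: l) = Symb.minus :: starDel l := by simp [starDel]

@[simp] lemma starDel_append (l₁ l₂ : List Symb) :
    starDel (l₁ ++ l₂) = starDel l₁ ++ starDel l₂ := by simp [starDel]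

lemma wsum_starDel (l : List Symb) : wsum (starDel l) = wsum l := by
  induction l with
  | nil => rfl
  | cons s t ih => cases s <;> simp [ih, valS]

lemma starDel_dualWord (l : List Symb) : starDel (dualWord l) = dualWord (starDel l) := by
  induction l with
  | nil => rfl
  | cons s t ih =>
    cases s <;> simp [dualWord, List.map_append, List.reverse_append] at ih ⊢ <;>
      simp [ih, dualSym]

lemma wsum_rotate (l : List Symb) (n : ℕ) : wsum (l.rotate n) = wsum l := by
  exact List.Perm.sum_eq (List.Perm.map valS (List.rotate_perm l n))

lemma sum_getD (l : List Symb) :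
    ∑ i ∈ Finset.range l.length, valS (l.getD i Symb.star) = wsum l := by
  induction l with
  | nil => simp
  | cons s t ih =>
    rw [List.length_cons, Finset.sum_range_succ']
    simp only [List.getD_cons_succ, List.getD_cons_zero, ih, wsum_cons]
    ring

lemma getD_dualWord (l : List Symb) (k : ℕ) (hk : k < l.length) :
    (dualWord l).getD k Symb.star = dualSym (l.getD (l.length - 1 - k) Symb.star) := by
  have h1 : k < (dualWord l).length := by simp [dualWord]; omega
  have h2 : l.length - 1 - k < l.length := by omega
  rw [List.getD_eq_getElem _ _ h1, List.getD_eq_getElem _ _ h2]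
  simp only [dualWord]
  rw [List.getElem_reverse, List.getElem_map]
  congr 1
  simp



def nsPos : List Symb → ℕ → ℕ
  | [], _ => 0
  | s :: w, t =>
    if s = Symb.star then nsPos w t + 1
    else match t with
      | 0 => 0
      | t + 1 => nsPos w t + 1

@[simp] lemma nsPos_nil (t : ℕ) : nsPos [] t = 0 := rfl

@[simp] lemma nsPos_cons_star (w : List Symb) (t : ℕ) :
    nsPos (Symb.star :: w) t = nsPos w t + 1 := by simp [nsPos]

lemma nsPos_cons_zero {s : Symb} (w : List Symb) (hs : s ≠ Symb.star) :
    nsPos (s :: w) 0 = 0 := by simp [nsPos, hs]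

lemma nsPos_cons_succ {s : Symb} (w : List Symb) (t : ℕ) (hs : s ≠ Symb.star) :
    nsPos (s :: w) (t + 1) = nsPos w t + 1 := by simp [nsPos, hs]

lemma nsPos_lt (l : List Symb) (t : ℕ) (h : t < (starDel l).length) : nsPos l t < l.length := by
  induction l generalizing t with
  | nil => simp at h
  | cons s w ih =>
    by_cases hs : s = Symb.star
    · subst hs
      simp only [starDel_cons_star] at h
      simpa using ih t h
    · cases s
      · cases t with
        | zero => simp [nsPos_cons_zero _ hs]
        | succ t =>
          simp only [starDel_cons_plus, List.length_cons] at h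
          rw [nsPos_cons_succ _ _ hs]
          simpa using ih t (by omega)
      · cases t with
        | zero => simp [nsPos_cons_zero _ hs]
        | succ t =>
          simp only [starDel_cons_minus, List.length_cons] at h
          rw [nsPos_cons_succ _ _ hs]
          simpa using ih t (by omega)
      · exact absurd rfl hs

lemma nsPos_append_lt (X Y : List Symb) (t : ℕ) (h : t < (starDel X).length) :
    nsPos (X ++ Y) t = nsPos X t := by
  induction X generalizing t with
  | nil => simp at h
  | cons s w ih =>
    by_cases hs : s = Symb.star
    · subst hs
      simp only [starDel_cons_star] at h
      simp [ih t h]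
    · cases t with
      | zero => rw [List.cons_append, nsPos_cons_zero _ hs, nsPos_cons_zero _ hs]
      | succ t =>
        have h' : t < (starDel w).length := by
          cases s <;> simp_all <;> omega
        rw [List.cons_append, nsPos_cons_succ _ _ hs, nsPos_cons_succ _ _ hs, ih t h']

lemma nsPos_append_add (X Y : List Symb) (t : ℕ) :
    nsPos (X ++ Y) ((starDel X).length + t) = X.length + nsPos Y t := by
  induction X with
  | nil => simp
  | cons s w ih =>
    by_cases hs : s = Symb.star
    · subst hs
      simp [ih]; omega
    · have hlen : (starDel (s :: w)).length = (starDel w).length + 1 := by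
        cases s <;> simp_all
      rw [List.cons_append, hlen,
        show (starDel w).length + 1 + t = ((starDel w).length + t) + 1 from by omega,
        nsPos_cons_succ _ _ hs, ih, List.length_cons]
      omega

lemma transfer (U V : List Symb) (t : ℕ)
    (ht : t < (starDel U).length + (starDel V).length) :
    (U.length + nsPos (V ++ U) t) % (U.length + V.length) =
      nsPos (U ++ V) ((t + (starDel U).length) % ((starDel U).length + (starDel V).length)) := by
  set ru := (starDel U).length with hru
  set rv := (starDel V).length with hrv
  rcases lt_or_ge t rv with h | h
  · rw [nsPos_append_lt V U t h]
    have h1 : (t + ru) % (ru + rv) = ru + t := by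
      rw [Nat.mod_eq_of_lt (by omega)]; omega
    rw [h1, nsPos_append_add U V t]
    have h2 : nsPos V t < V.length := nsPos_lt V t h
    exact Nat.mod_eq_of_lt (by omega)
  · have htr : t - rv < ru := by omega
    have h1 : nsPos (V ++ U) t = V.length + nsPos U (t - rv) := by
      conv_lhs => rw [show t = rv + (t - rv) from by omega]
      exact nsPos_append_add V U (t - rv)
    have h2 : (t + ru) % (ru + rv) = t - rv := by
      rw [show t + ru = (t - rv) + (ru + rv) from by omega, Nat.add_mod_right,
        Nat.mod_eq_of_lt (by omega)]
    have h3 : nsPos U (t - rv) < U.length := nsPos_lt U (t - rv) htr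
    rw [h1, h2, nsPos_append_lt U V (t - rv) htr,
      show U.length + (V.length + nsPos U (t - rv)) =
        nsPos U (t - rv) + (U.length + V.length) from by omega,
      Nat.add_mod_right, Nat.mod_eq_of_lt (by omega)]



lemma key (a b u v : List Symb)
    (hx : a ++ Symb.plus :: b = u ++ v)
    (hy : dualWord (a ++ Symb.minus :: b) = v ++ u) :
    (b.length + u.length) % (a.length + b.length + 1) = a.length := by
  set m := a.length + b.length + 1 with hm
  set x := a ++ Symb.plus :: b with hxdef
  set y := a ++ Symb.minus :: b with hydef
  have hxl : x.length = m := by simp [hxdef, hm]; omega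
  have hyl : y.length = m := by simp [hydef, hm]; omega
  have hm0 : 0 < m := by omega
  set c := u.length % m with hc
  have hcm : c < m := Nat.mod_lt _ hm0
  -- the rotation of x by |u| is v ++ u
  have hrot : x.rotate u.length = v ++ u := by
    rw [hx]; exact List.rotate_append_length_eq u v
  have hvul : (v ++ u).length = m := by rw [← hrot, List.length_rotate, hxl]
  -- pointwise condition
  have hC : ∀ k, k < m → x.getD ((k + c) % m) Symb.star
      = dualSym (y.getD (m - 1 - k) Symb.star) := by
    intro k hk
    have h1 : (v ++ u).getD k Symb.star = x.getD ((k + c) % m) Symb.star := by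
      rw [← hrot]
      have hk1 : k < (x.rotate u.length).length := by
        rw [List.length_rotate, hxl]; exact hk
      have hk2 : (k + c) % m < x.length := by rw [hxl]; exact Nat.mod_lt _ hm0
      rw [List.getD_eq_getElem _ _ hk1, List.getD_eq_getElem _ _ hk2]
      rw [List.getElem_rotate]
      congr 1
      rw [hxl, hc, Nat.add_mod_mod]
    have h2 : (v ++ u).getD k Symb.star = dualSym (y.getD (m - 1 - k) Symb.star) := by
      rw [← hy, getD_dualWord y k (by omega), hyl]
    rw [← h1, h2]
  -- total weight of x is 1
  have hsx : wsum x = 1 := by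
    have h1 : wsum (v ++ u) = wsum x := by rw [← hrot, wsum_rotate]
    have h2 : wsum (v ++ u) = - wsum y := by rw [← hy, wsum_dualWord]
    have h3 : wsum x = wsum a + 1 + wsum b := by simp [hxdef, valS]; ring
    have h4 : wsum y = wsum a - 1 + wsum b := by simp [hydef, valS]; ring
    omega
  -- the sum over the rotated positions
  have hS : ∑ k ∈ Finset.range m, valS (x.getD ((k + c) % m) Symb.star) = 1 := by
    have he : ∀ k ∈ Finset.range m, valS (x.getD ((k + c) % m) Symb.star)
        = valS ((x.rotate c).getD k Symb.star) := by
      intro k hk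
      simp only [Finset.mem_range] at hk
      have hk1 : k < (x.rotate c).length := by
        rw [List.length_rotate, hxl]; exact hk
      have hk2 : (k + c) % m < x.length := by rw [hxl]; exact Nat.mod_lt _ hm0
      congr 1
      rw [List.getD_eq_getElem _ _ hk1, List.getD_eq_getElem _ _ hk2]
      rw [List.getElem_rotate]
      congr 1
      rw [hxl]
    rw [Finset.sum_congr rfl he,
      show m = (x.rotate c).length from by rw [List.length_rotate, hxl],
      sum_getD, wsum_rotate, hsx]
  -- values at distinguished positions
  have ham : a.length < m := by omega
  have hbm : b.length < m := by omega
  have hx_at_a : x.getD a.length Symb.star = Symb.plus := by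
    rw [hxdef, List.getD_append_right _ _ _ _ (le_refl _), Nat.sub_self, List.getD_cons_zero]
  have hy_at_a : y.getD a.length Symb.star = Symb.minus := by
    rw [hydef, List.getD_append_right _ _ _ _ (le_refl _), Nat.sub_self, List.getD_cons_zero]
  have hxy : ∀ j, j ≠ a.length → y.getD j Symb.star = x.getD j Symb.star := by
    intro j hj
    rcases lt_or_ge j a.length with h | h
    · rw [hxdef, hydef, List.getD_append _ _ _ _ h, List.getD_append _ _ _ _ h]
    · have h' : a.length < j := lt_of_le_of_ne h (Ne.symm hj)
      obtain ⟨d, hd⟩ : ∃ d, j - a.length = d + 1 := ⟨j - a.length - 1, by omega⟩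
      rw [hxdef, hydef, List.getD_append_right _ _ _ _ (by omega),
        List.getD_append_right _ _ _ _ (by omega), hd, List.getD_cons_succ,
        List.getD_cons_succ]
  -- the goal, by contradiction
  rw [show (b.length + u.length) % (a.length + b.length + 1) = (b.length + c) % m from by
    rw [hc, Nat.add_mod_mod]]
  by_contra hne
  -- x at the image of the distinguished + is +
  have hx_i0 : x.getD ((b.length + c) % m) Symb.star = Symb.plus := by
    have h1 := hC b.length hbm
    rw [show m - 1 - b.length = a.length from by omega, hy_at_a] at h1
    exact h1
  -- the involution τ
  set τ : ℕ → ℕ := fun k => (m - 1 - k + (m - c)) % m with hτ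
  have fact1 : ∀ k, k < m → (τ k + c) % m = m - 1 - k := by
    intro k hk
    rw [hτ]
    simp only
    rw [Nat.mod_add_mod, show m - 1 - k + (m - c) + c = (m - 1 - k) + m from by omega,
      Nat.add_mod_right, Nat.mod_eq_of_lt (by omega)]
  have hτ' : ∀ k, k < m → τ k = m - 1 - ((k + c) % m) := by
    intro k hk
    rw [hτ]; simp only
    rcases lt_or_ge (k + c) m with h | h
    · rw [Nat.mod_eq_of_lt h, show m - 1 - k + (m - c) = (m - 1 - (k + c)) + m from by omega,
        Nat.add_mod_right, Nat.mod_eq_of_lt (by omega)]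
    · have h1 : (k + c) % m = k + c - m := by
        rw [Nat.mod_eq_sub_mod h, Nat.mod_eq_of_lt (by omega)]
      rw [h1, Nat.mod_eq_of_lt (by omega)]
      omega
  have hτlt : ∀ k, k < m → τ k < m := by
    intro k hk; rw [hτ' k hk]; omega
  have hττ : ∀ k, k < m → τ (τ k) = k := by
    intro k hk
    rw [hτ' (τ k) (hτlt k hk), fact1 k hk]
    omega
  set g : ℕ → ℤ := fun k => valS (x.getD ((k + c) % m) Symb.star) with hg
  have hτbne : τ b.length ≠ b.length := by
    intro hE
    apply hne
    have h1 := hτ' b.length hbm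
    rw [hE] at h1
    have h2 : (b.length + c) % m < m := Nat.mod_lt _ hm0
    omega
  have hτblt : τ b.length < m := hτlt b.length hbm
  set s : Finset ℕ := ((Finset.range m).erase b.length).erase (τ b.length) with hs
  have hmems : ∀ k, k ∈ s ↔ (k ≠ τ b.length ∧ k ≠ b.length ∧ k < m) := by
    intro k; simp [hs, Finset.mem_erase, Finset.mem_range]
  have hpair : ∀ k, k < m → k ≠ b.length → g k + g (τ k) = 0 := by
    intro k hk hkb
    have h1 : g (τ k) = valS (x.getD (m - 1 - k) Symb.star) := by
      rw [hg]; simp only; rw [fact1 k hk]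
    have h2 : g k = - valS (x.getD (m - 1 - k) Symb.star) := by
      rw [hg]; simp only
      rw [hC k hk, hxy (m - 1 - k) (by omega), valS_dualSym]
    rw [h1, h2]; ring
  have hzero : ∑ k ∈ s, g k = 0 := by
    apply Finset.sum_involution (fun k _ => τ k)
    · intro k hk
      rw [hmems] at hk
      exact hpair k hk.2.2 hk.2.1
    · intro k hk hgk
      rw [hmems] at hk
      intro hE
      have := hpair k hk.2.2 hk.2.1
      rw [hE] at this
      omega
    · intro k hk
      rw [hmems] at hk ⊢
      obtain ⟨h1, h2, h3⟩ := hk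
      refine ⟨?_, ?_, hτlt k h3⟩
      · intro hE
        have := congrArg τ hE
        rw [hττ k h3, hττ b.length hbm] at this
        exact h2 this
      · intro hE
        have := congrArg τ hE
        rw [hττ k h3] at this
        exact h1 (this.trans rfl)
    · intro k hk
      rw [hmems] at hk
      exact hττ k hk.2.2
  have hg1 : g b.length = 1 := by
    rw [hg]; simp only; rw [hx_i0]; rfl
  have hg2 : g (τ b.length) = 1 := by
    rw [hg]; simp only
    rw [fact1 b.length hbm, show m - 1 - b.length = a.length from by omega, hx_at_a]; rfl
  have hmem1 : b.length ∈ Finset.range m := Finset.mem_range.mpr hbm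
  have hmem2 : τ b.length ∈ (Finset.range m).erase b.length := by
    rw [Finset.mem_erase]; exact ⟨hτbne, Finset.mem_range.mpr hτblt⟩
  have e1 := Finset.add_sum_erase (Finset.range m) g hmem1
  have e2 := Finset.add_sum_erase ((Finset.range m).erase b.length) g hmem2
  rw [← hs] at e2
  have hS' : ∑ k ∈ Finset.range m, g k = 1 := hS
  omega

end Stmt10Aux

open Stmt10Aux

/-- `W` and `Z` represent the same cycle: `Z` or its dual is a rotation of `W` -/
def SameCycle (W Z : List Symb) : Prop :=
  ∃ U V : List Symb, W = U ++ V ∧ (Z = V ++ U ∨ dualWord Z = V ++ U)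

/-- If `A' = E'`, `B' = F'` and `C(A+B**) = C(E-F**)`, then `B**A = Ē**F̄`. -/
theorem stmt_10 (A B E F : List Symb)
    (hAE : starDel A = starDel E) (hBF : starDel B = starDel F)
    (h : SameCycle (A ++ Symb.plus :: (B ++ [Symb.star, Symb.star]))
                   (E ++ Symb.minus :: (F ++ [Symb.star, Symb.star]))) :
    B ++ [Symb.star, Symb.star] ++ A =
      dualWord E ++ [Symb.star, Symb.star] ++ dualWord F := by
  obtain ⟨U, V, hW, hZ⟩ := h
  have hA : wsum A = wsum E := by rw [← wsum_starDel A, hAE, wsum_starDel]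
  have hB : wsum B = wsum F := by rw [← wsum_starDel B, hBF, wsum_starDel]
  rcases hZ with hZ | hZ
  · exfalso
    have h1 : wsum (A ++ Symb.plus :: (B ++ [Symb.star, Symb.star]))
        = wsum (E ++ Symb.minus :: (F ++ [Symb.star, Symb.star])) := by
      rw [hW, hZ, wsum_append, wsum_append]; ring
    simp [valS] at h1
    omega
  · set a := starDel A with ha
    set b := starDel B with hb
    have hdZ : dualWord (E ++ Symb.minus :: (F ++ [Symb.star, Symb.star]))
        = (Symb.star :: Symb.star :: dualWord F) ++ (Symb.plus :: dualWord E) := by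
      simp [dualWord, dualSym, List.append_assoc]
    have hdZ' : dualWord (E ++ Symb.minus :: (F ++ [Symb.star, Symb.star]))
        = ((Symb.star :: Symb.star :: dualWord F) ++ [Symb.plus]) ++ dualWord E := by
      simp [dualWord, dualSym, List.append_assoc]
    have hsd1 : starDel U ++ starDel V = a ++ Symb.plus :: b := by
      rw [← starDel_append, ← hW]; simp; rfl
    have hsd2 : starDel V ++ starDel U = dualWord (a ++ Symb.minus :: b) := by
      rw [← starDel_append, ← hZ, starDel_dualWord]
      congr 1
      simp
      rw [← hAE, ← hBF]
    have hkey := key a b (starDel U) (starDel V) hsd1.symm hsd2.symm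
    have hm' : (starDel U).length + (starDel V).length = a.length + b.length + 1 := by
      have := congrArg List.length hsd1
      simp at this
      omega
    have htr := transfer U V b.length (by omega)
    rw [hm', hkey] at htr
    have hXlen : (starDel (Symb.star :: Symb.star :: dualWord F)).length = b.length := by
      rw [starDel_cons_star, starDel_cons_star, starDel_dualWord]
      simp [dualWord]
      rw [← hBF]
    have h4 : nsPos (V ++ U) b.length = F.length + 2 := by
      rw [← hZ, hdZ,
        show b.length = (starDel (Symb.star :: Symb.star :: dualWord F)).length + 0 from by
          rw [Nat.add_zero, hXlen],
        nsPos_append_add, nsPos_cons_zero _ (by decide)]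
      simp [dualWord]
    have h5 : nsPos (U ++ V) a.length = A.length := by
      rw [← hW,
        show a.length = (starDel A).length + 0 from by rw [Nat.add_zero, ← ha],
        nsPos_append_add, nsPos_cons_zero _ (by decide)]
      omega
    rw [h4, h5] at htr
    set n := U.length + V.length with hn
    have hnval : n = A.length + B.length + 3 := by
      have := congrArg List.length hW
      simp at this
      omega
    have hmod2 : (U.length + F.length + 3) % n = A.length + 1 := by
      rw [show U.length + F.length + 3 = U.length + (F.length + 2) + 1 from by ring,
        Nat.add_mod, htr, Nat.mod_eq_of_lt (show 1 < n by omega),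
        Nat.mod_eq_of_lt (by omega)]
    have hrotW : (A ++ Symb.plus :: (B ++ [Symb.star, Symb.star])).rotate (A.length + 1)
        = (B ++ [Symb.star, Symb.star]) ++ (A ++ [Symb.plus]) := by
      rw [show A ++ Symb.plus :: (B ++ [Symb.star, Symb.star])
            = (A ++ [Symb.plus]) ++ (B ++ [Symb.star, Symb.star]) from by simp,
        show A.length + 1 = (A ++ [Symb.plus]).length from by simp]
      exact List.rotate_append_length_eq _ _
    have hrot2 : (A ++ Symb.plus :: (B ++ [Symb.star, Symb.star])).rotate
          (U.length + F.length + 3)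
        = dualWord E ++ ((Symb.star :: Symb.star :: dualWord F) ++ [Symb.plus]) := by
      rw [show U.length + F.length + 3 = U.length + (F.length + 3) from by ring,
        ← List.rotate_rotate, hW, List.rotate_append_length_eq, ← hZ, hdZ',
        show F.length + 3 = ((Symb.star :: Symb.star :: dualWord F) ++ [Symb.plus]).length from by
          simp [dualWord],
        List.rotate_append_length_eq]
    have heq : (B ++ [Symb.star, Symb.star]) ++ (A ++ [Symb.plus])
        = dualWord E ++ ((Symb.star :: Symb.star :: dualWord F) ++ [Symb.plus]) := by
      rw [← hrotW, ← hrot2]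
      conv_lhs => rw [← List.rotate_mod]
      conv_rhs => rw [← List.rotate_mod]
      congr 1
      have hlen : (A ++ Symb.plus :: (B ++ [Symb.star, Symb.star])).length = n := by
        simp
        omega
      rw [hlen, hmod2, Nat.mod_eq_of_lt (by omega)]
    have heq2 : (B ++ [Symb.star, Symb.star] ++ A) ++ [Symb.plus]
        = (dualWord E ++ [Symb.star, Symb.star] ++ dualWord F) ++ [Symb.plus] := by
      simpa [List.append_assoc] using heq
    exact List.append_cancel_right heq2
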